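/- Let M be a finitely generated graded module of projective dimension p over the standard graded polynomial ring S = k[x_1,…,x_n]. If f is a nonzero homogeneous element of Ann(M) of degree d, then T_p(M) ≤ T_{p−1}(M) + d. -/

import Mathlib

open MvPolynomial

/-- The degree-`d` homogeneous piece of the standard graded polynomial ring
`S = k[x_1,…,x_n]` (each variable of degree one), with pieces indexed by `ℤ`
(zero in negative degrees). -/
noncomputable def polyPiece (k : Type) [Field k] (n : ℕ) (d : ℤ) :
    Submodule k (MvPolynomial (Fin n) k) :=
  if 0 ≤ d then MvPolynomial.homogeneousSubmodule (Fin n) k d.toNat else ⊥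

/-- The irrelevant maximal ideal `(x_1,…,x_n)` of `S = k[x_1,…,x_n]`. -/
noncomputable def maxIdeal (k : Type) [Field k] (n : ℕ) : Ideal (MvPolynomial (Fin n) k) :=
  Ideal.span (Set.range MvPolynomial.X)

/-- The degree-`d` piece of the graded free module `⊕_{t : ι} S(-dg t)`,
realized concretely as `ι →₀ S`. -/
noncomputable def freePiece (k : Type) [Field k] (n : ℕ) {ι : Type} (dg : ι → ℤ) (d : ℤ) :
    Submodule k (ι →₀ MvPolynomial (Fin n) k) :=
  ⨅ t : ι, (polyPiece k n (d - dg t)).comap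
    ((Finsupp.lapply t : (ι →₀ MvPolynomial (Fin n) k) →ₗ[MvPolynomial (Fin n) k]
        MvPolynomial (Fin n) k).restrictScalars k)

/-- `piece` is a grading on the `S`-module `M`, making `M` a graded `S`-module. -/
structure IsGrading (k : Type) [Field k] (n : ℕ) (M : Type) [AddCommGroup M]
    [Module (MvPolynomial (Fin n) k) M] [Module k M]
    [IsScalarTower k (MvPolynomial (Fin n) k) M]
    (piece : ℤ → Submodule k M) : Prop where
  internal : DirectSum.IsInternal piece
  smul_mem : ∀ (i : ℕ) (d : ℤ) ⦃s : MvPolynomial (Fin n) k⦄,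
      s ∈ MvPolynomial.homogeneousSubmodule (Fin n) k i →
      ∀ ⦃m : M⦄, m ∈ piece d → s • m ∈ piece ((i : ℤ) + d)

/-- A minimal graded free resolution `⋯ → F_1 → F_0 → M → 0` of the graded
`S`-module `M` (with grading `piece`), where `F_i = ⊕_{t : ι i} S(-dg i t)` is
realized as `ι i →₀ S`.  All the `ι i` are finite, so `M` is finitely generated. -/
structure MinFreeRes (k : Type) [Field k] (n : ℕ) (M : Type) [AddCommGroup M]
    [Module (MvPolynomial (Fin n) k) M] [Module k M]
    [IsScalarTower k (MvPolynomial (Fin n) k) M]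
    (piece : ℤ → Submodule k M) where
  ι : ℕ → Type
  fin : ∀ i, Fintype (ι i)
  dg : ∀ i, ι i → ℤ
  diff : ∀ i, (ι (i + 1) →₀ MvPolynomial (Fin n) k) →ₗ[MvPolynomial (Fin n) k]
      (ι i →₀ MvPolynomial (Fin n) k)
  aug : (ι 0 →₀ MvPolynomial (Fin n) k) →ₗ[MvPolynomial (Fin n) k] M
  aug_surjective : Function.Surjective aug
  ker_aug : LinearMap.ker aug = LinearMap.range (diff 0)
  exact : ∀ i, LinearMap.ker (diff i) = LinearMap.range (diff (i + 1))
  diff_graded : ∀ i (d : ℤ) x, x ∈ freePiece k n (dg (i + 1)) d →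
      diff i x ∈ freePiece k n (dg i) d
  aug_graded : ∀ (d : ℤ) x, x ∈ freePiece k n (dg 0) d → aug x ∈ piece d
  minimal : ∀ i, LinearMap.range (diff i) ≤
      maxIdeal k n • (⊤ : Submodule (MvPolynomial (Fin n) k)
        (ι i →₀ MvPolynomial (Fin n) k))

namespace MinFreeRes

variable {k : Type} [Field k] {n : ℕ} {M : Type} [AddCommGroup M]
  [Module (MvPolynomial (Fin n) k) M] [Module k M]
  [IsScalarTower k (MvPolynomial (Fin n) k) M] {piece : ℤ → Submodule k M}

/-- The resolution has length exactly `p`; equivalently, `pd_S M = p`. -/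
def lengthEq (R : MinFreeRes k n M piece) (p : ℕ) : Prop :=
  Nonempty (R.ι p) ∧ ∀ i, p < i → IsEmpty (R.ι i)

/-- The `i`-th maximal graded shift `T_i(M)`: the largest degree of a generator of
the `i`-th term of the minimal graded free resolution of `M` (equivalently, the top
degree of `Tor_i^S(M,k)`), and `⊥` if that term vanishes. -/
noncomputable def T (R : MinFreeRes k n M piece) (i : ℕ) : WithBot ℤ :=
  letI := R.fin i
  (Finset.univ : Finset (R.ι i)).sup fun t => ((R.dg i t : ℤ) : WithBot ℤ)

/-- The Castelnuovo–Mumford regularity `reg M = max_{0 ≤ i ≤ p} (T_i(M) - i)`,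
where `p = pd M`. -/
noncomputable def reg (R : MinFreeRes k n M piece) (p : ℕ) : WithBot ℤ :=
  (Finset.range (p + 1)).sup fun i => R.T i + ((-(i : ℤ) : ℤ) : WithBot ℤ)

end MinFreeRes

/-- The canonical degree-`d` graded piece of `S/I`. -/
noncomputable def quotPiece (k : Type) [Field k] (n : ℕ) (I : Ideal (MvPolynomial (Fin n) k))
    (d : ℤ) : Submodule k (MvPolynomial (Fin n) k ⧸ I) :=
  (polyPiece k n d).map (Ideal.Quotient.mkₐ k I).toLinearMap

/-- `I` is a homogeneous ideal of `S = k[x_1,…,x_n]` for the standard grading. -/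
def IsHomogeneousIdeal (k : Type) [Field k] (n : ℕ)
    (I : Ideal (MvPolynomial (Fin n) k)) : Prop :=
  ∀ f ∈ I, ∀ d : ℕ, MvPolynomial.homogeneousComponent d f ∈ I

/-- The depth of `M` (w.r.t. the homogeneous maximal ideal): the supremum of the
lengths of `M`-regular sequences contained in `(x_1,…,x_n)`. -/
noncomputable def moduleDepth (k : Type) [Field k] (n : ℕ) (M : Type) [AddCommGroup M]
    [Module (MvPolynomial (Fin n) k) M] : ℕ∞ :=
  sSup {r : ℕ∞ | ∃ L : List (MvPolynomial (Fin n) k), (L.length : ℕ∞) = r ∧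
    (∀ f ∈ L, f ∈ maxIdeal k n) ∧ RingTheory.Sequence.IsRegular M L}

/-- The Krull dimension of the module `M`, i.e. `dim (S / ann M)`. -/
noncomputable def moduleDim (k : Type) [Field k] (n : ℕ) (M : Type) [AddCommGroup M]
    [Module (MvPolynomial (Fin n) k) M] : WithBot ℕ∞ :=
  ringKrullDim (MvPolynomial (Fin n) k ⧸ Module.annihilator (MvPolynomial (Fin n) k) M)



section Aux

variable {k : Type} [Field k] {n : ℕ}

lemma mem_polyPiece_neg {e : ℤ} (he : e < 0) {q : MvPolynomial (Fin n) k}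
    (hq : q ∈ polyPiece k n e) : q = 0 := by
  rw [polyPiece, if_neg (not_le.2 he)] at hq
  simpa using hq

lemma polyPiece_nonneg {e : ℤ} (he : 0 ≤ e) :
    polyPiece k n e = MvPolynomial.homogeneousSubmodule (Fin n) k e.toNat := if_pos he

lemma polyPiece_mul {a e : ℤ} {c q : MvPolynomial (Fin n) k}
    (hc : c ∈ polyPiece k n a) (hq : q ∈ polyPiece k n e) :
    c * q ∈ polyPiece k n (a + e) := by
  rcases lt_or_ge a 0 with ha | ha
  · rw [mem_polyPiece_neg ha hc, zero_mul]; exact Submodule.zero_mem _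
  rcases lt_or_ge e 0 with he | he
  · rw [mem_polyPiece_neg he hq, mul_zero]; exact Submodule.zero_mem _
  rw [polyPiece_nonneg ha, MvPolynomial.mem_homogeneousSubmodule] at hc
  rw [polyPiece_nonneg he, MvPolynomial.mem_homogeneousSubmodule] at hq
  rw [polyPiece_nonneg (by omega), MvPolynomial.mem_homogeneousSubmodule,
    show (a + e).toNat = a.toNat + e.toNat by omega]
  exact hc.mul hq

lemma mem_freePiece_iff {ι : Type} {dg : ι → ℤ} {e : ℤ}
    {x : ι →₀ MvPolynomial (Fin n) k} :
    x ∈ freePiece k n dg e ↔ ∀ t, x t ∈ polyPiece k n (e - dg t) := by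
  simp only [freePiece, Submodule.mem_iInf, Submodule.mem_comap,
    LinearMap.coe_restrictScalars, Finsupp.lapply_apply]

lemma single_one_mem_freePiece {ι : Type} (dg : ι → ℤ) (t : ι) :
    Finsupp.single t (1 : MvPolynomial (Fin n) k) ∈ freePiece k n dg (dg t) := by
  rw [mem_freePiece_iff]
  intro s
  rcases eq_or_ne t s with rfl | h
  · rw [Finsupp.single_eq_same, show dg t - dg t = (0 : ℤ) by ring,
      polyPiece_nonneg le_rfl]
    exact (MvPolynomial.mem_homogeneousSubmodule _ _).2
      (MvPolynomial.isHomogeneous_one _ _)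
  · rw [Finsupp.single_eq_of_ne' h]
    exact Submodule.zero_mem _

lemma smul_mem_freePiece {ι : Type} {dg : ι → ℤ} {a e : ℤ}
    {c : MvPolynomial (Fin n) k} (hc : c ∈ polyPiece k n a)
    {x : ι →₀ MvPolynomial (Fin n) k} (hx : x ∈ freePiece k n dg e) :
    c • x ∈ freePiece k n dg (a + e) := by
  rw [mem_freePiece_iff] at hx ⊢
  intro t
  have h := polyPiece_mul (n := n) hc (hx t)
  rw [show a + (e - dg t) = (a + e) - dg t by ring] at h
  simpa [Finsupp.smul_apply, smul_eq_mul] using h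

/-- Projection of a polynomial onto its piece of (integer) degree `j`. -/
noncomputable def pproj (j : ℤ) (q : MvPolynomial (Fin n) k) : MvPolynomial (Fin n) k :=
  if 0 ≤ j then MvPolynomial.homogeneousComponent j.toNat q else 0

lemma pproj_zero (j : ℤ) : pproj j (0 : MvPolynomial (Fin n) k) = 0 := by
  unfold pproj; split <;> simp

lemma pproj_add (j : ℤ) (q r : MvPolynomial (Fin n) k) :
    pproj j (q + r) = pproj j q + pproj j r := by
  unfold pproj; split <;> simp

lemma pproj_mem (j : ℤ) (q : MvPolynomial (Fin n) k) : pproj j q ∈ polyPiece k n j := by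
  unfold pproj polyPiece
  split
  · exact (MvPolynomial.mem_homogeneousSubmodule _ _).2
      (MvPolynomial.homogeneousComponent_isHomogeneous _ _)
  · exact Submodule.zero_mem _

lemma pproj_of_mem {e j : ℤ} {q : MvPolynomial (Fin n) k}
    (hq : q ∈ polyPiece k n e) : pproj j q = if j = e then q else 0 := by
  rcases lt_or_ge e 0 with he | he
  · rw [mem_polyPiece_neg he hq, pproj_zero]
    simp
  · rw [polyPiece_nonneg he] at hq
    rcases lt_or_ge j 0 with hj | hj
    · rw [pproj, if_neg (not_le.2 hj), if_neg (by omega)]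
    · rw [pproj, if_pos hj, MvPolynomial.homogeneousComponent_of_mem hq]
      by_cases h : j = e
      · rw [if_pos (by omega), if_pos h]
      · rw [if_neg (by omega), if_neg h]

/-- Projection of an element of the graded free module onto its degree-`e` piece. -/
noncomputable def fproj {ι : Type} (dg : ι → ℤ) (e : ℤ)
    (x : ι →₀ MvPolynomial (Fin n) k) : ι →₀ MvPolynomial (Fin n) k :=
  Finsupp.onFinset x.support (fun t => pproj (e - dg t) (x t)) (fun t h => by
    rw [Finsupp.mem_support_iff]
    intro h0
    exact h (by show pproj (e - dg t) (x t) = 0; rw [h0, pproj_zero]))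

lemma fproj_apply {ι : Type} (dg : ι → ℤ) (e : ℤ)
    (x : ι →₀ MvPolynomial (Fin n) k) (t : ι) :
    fproj dg e x t = pproj (e - dg t) (x t) := rfl

lemma fproj_mem {ι : Type} (dg : ι → ℤ) (e : ℤ) (x : ι →₀ MvPolynomial (Fin n) k) :
    fproj dg e x ∈ freePiece k n dg e := by
  rw [mem_freePiece_iff]
  intro t
  rw [fproj_apply]
  exact pproj_mem _ _

lemma fproj_of_mem {ι : Type} {dg : ι → ℤ} (e : ℤ) {j : ℤ}
    {x : ι →₀ MvPolynomial (Fin n) k} (hx : x ∈ freePiece k n dg j) :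
    fproj dg e x = if e = j then x else 0 := by
  rw [mem_freePiece_iff] at hx
  ext t
  rw [fproj_apply, pproj_of_mem (hx t)]
  by_cases h : e = j
  · subst h; simp
  · rw [if_neg (by omega), if_neg h, Finsupp.coe_zero, Pi.zero_apply]

/-- `fproj` as an additive monoid hom. -/
noncomputable def fprojHom {ι : Type} (dg : ι → ℤ) (e : ℤ) :
    (ι →₀ MvPolynomial (Fin n) k) →+ (ι →₀ MvPolynomial (Fin n) k) where
  toFun := fproj dg e
  map_zero' := by ext t; rw [fproj_apply]; simp [pproj_zero]
  map_add' x y := by ext t; simp only [fproj_apply, Finsupp.add_apply, pproj_add]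

lemma sum_fproj {ι : Type} (dg : ι → ℤ) (x : ι →₀ MvPolynomial (Fin n) k) :
    ∃ J : Finset ℤ, (∑ e ∈ J, fproj dg e x) = x := by
  refine ⟨x.support.biUnion (fun t =>
    (Finset.range ((x t).totalDegree + 1)).image (fun m : ℕ => dg t + (m : ℤ))), ?_⟩
  ext t
  rw [Finsupp.finset_sum_apply]
  simp only [fproj_apply]
  by_cases hxt : x t = 0
  · simp [hxt, pproj_zero]
  have ht : t ∈ x.support := Finsupp.mem_support_iff.2 hxt
  have hsub : ((Finset.range ((x t).totalDegree + 1)).image (fun m : ℕ => dg t + (m : ℤ)))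
      ⊆ x.support.biUnion (fun t =>
        (Finset.range ((x t).totalDegree + 1)).image (fun m : ℕ => dg t + (m : ℤ))) :=
    Finset.subset_biUnion_of_mem
      (fun t => (Finset.range ((x t).totalDegree + 1)).image (fun m : ℕ => dg t + (m : ℤ))) ht
  rw [← Finset.sum_subset hsub ?_]
  · rw [Finset.sum_image (by intro a _ b _ h; have h' : dg t + (a : ℤ) = dg t + (b : ℤ) := h; omega)]
    have : ∀ m ∈ Finset.range ((x t).totalDegree + 1),
        pproj (dg t + (m : ℤ) - dg t) (x t) =
          MvPolynomial.homogeneousComponent m (x t) := by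
      intro m _
      rw [show dg t + (m : ℤ) - dg t = (m : ℤ) by ring, pproj, if_pos (by positivity)]
      simp
    rw [Finset.sum_congr rfl this, MvPolynomial.sum_homogeneousComponent]
  · intro e _ heA
    rcases lt_or_ge (e - dg t) 0 with hneg | hpos
    · rw [pproj, if_neg (not_le.2 hneg)]
    · rw [pproj, if_pos hpos]
      apply MvPolynomial.homogeneousComponent_eq_zero
      by_contra hle
      push_neg at hle
      exact heA (Finset.mem_image.2 ⟨(e - dg t).toNat,
        Finset.mem_range.2 (by omega), by omega⟩)

/-- A homogeneous element in the image of a graded map has a homogeneous preimage. -/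
lemma exists_homog_preimage {ι ι' : Type} {dg : ι → ℤ} {dg' : ι' → ℤ}
    (D : (ι' →₀ MvPolynomial (Fin n) k) →ₗ[MvPolynomial (Fin n) k]
      (ι →₀ MvPolynomial (Fin n) k))
    (hD : ∀ (e : ℤ) y, y ∈ freePiece k n dg' e → D y ∈ freePiece k n dg e)
    {e : ℤ} {x : ι →₀ MvPolynomial (Fin n) k} (hx : x ∈ freePiece k n dg e)
    {y : ι' →₀ MvPolynomial (Fin n) k} (hy : D y = x) :
    ∃ y', y' ∈ freePiece k n dg' e ∧ D y' = x := by
  obtain ⟨J, hJ⟩ := sum_fproj dg' y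
  have h3 : x = if e ∈ J then D (fproj dg' e y) else 0 := by
    have h1 : x = ∑ j ∈ J, D (fproj dg' j y) := by
      rw [← map_sum, hJ, hy]
    have h2 : fproj dg e x = ∑ j ∈ J, fproj dg e (D (fproj dg' j y)) := by
      rw [h1]
      exact map_sum (fprojHom dg e) _ _
    have h4 : ∀ j ∈ J, fproj dg e (D (fproj dg' j y))
        = if e = j then D (fproj dg' j y) else 0 := fun j _ =>
      fproj_of_mem e (hD j _ (fproj_mem dg' j y))
    rw [Finset.sum_congr rfl h4, Finset.sum_ite_eq] at h2
    rw [← h2, fproj_of_mem e hx, if_pos rfl]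
  by_cases he : e ∈ J
  · exact ⟨fproj dg' e y, fproj_mem dg' e y, by rw [h3, if_pos he]⟩
  · exact ⟨0, Submodule.zero_mem _, by rw [h3, if_neg he, map_zero]⟩

lemma linearCombination_mem_freePiece {ι ι' : Type} {dgA : ι → ℤ} {dgB : ι' → ℤ} {d : ℕ}
    {g : ι → (ι' →₀ MvPolynomial (Fin n) k)}
    (hg : ∀ t, g t ∈ freePiece k n dgB (dgA t + d))
    {e : ℤ} {x : ι →₀ MvPolynomial (Fin n) k} (hx : x ∈ freePiece k n dgA e) :
    Finsupp.linearCombination (MvPolynomial (Fin n) k) g x ∈ freePiece k n dgB (e + d) := by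
  rw [Finsupp.linearCombination_apply, Finsupp.sum]
  refine Submodule.sum_mem _ fun t _ => ?_
  have h := smul_mem_freePiece (mem_freePiece_iff.1 hx t) (hg t)
  rwa [show (e - dgA t) + (dgA t + (d : ℤ)) = e + d by ring] at h

end Aux

/-- The graded null-homotopy for multiplication by `f ∈ Ann M`. -/
lemma MinFreeRes.homotopy {k : Type} [Field k] {n : ℕ} {M : Type} [AddCommGroup M]
    [Module (MvPolynomial (Fin n) k) M] [Module k M]
    [IsScalarTower k (MvPolynomial (Fin n) k) M] {pM : ℤ → Submodule k M}
    (RM : MinFreeRes k n M pM)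
    (f : MvPolynomial (Fin n) k) (d : ℕ)
    (hfhom : f ∈ MvPolynomial.homogeneousSubmodule (Fin n) k d)
    (hfann : f ∈ Module.annihilator (MvPolynomial (Fin n) k) M) :
    ∀ i, ∃ g : RM.ι i → (RM.ι (i + 1) →₀ MvPolynomial (Fin n) k),
      (∀ t, g t ∈ freePiece k n (RM.dg (i + 1)) (RM.dg i t + d)) ∧
      ∀ y : RM.ι (i + 1) →₀ MvPolynomial (Fin n) k,
        f • y - Finsupp.linearCombination (MvPolynomial (Fin n) k) g (RM.diff i y)
          ∈ LinearMap.range (RM.diff (i + 1)) := by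
  have hfp : f ∈ polyPiece k n (d : ℤ) := by
    rw [polyPiece_nonneg (by positivity), Int.toNat_natCast]
    exact hfhom
  have hsmul : ∀ {ι : Type} (dg : ι → ℤ) (t : ι),
      f • (Finsupp.single t (1 : MvPolynomial (Fin n) k))
        ∈ freePiece k n dg (dg t + d) := by
    intro ι dg t
    have h := smul_mem_freePiece hfp (single_one_mem_freePiece dg t)
    rwa [add_comm] at h
  intro i
  induction i with
  | zero =>
    have key : ∀ t : RM.ι 0, ∃ gt,
        gt ∈ freePiece k n (RM.dg 1) (RM.dg 0 t + d) ∧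
          RM.diff 0 gt = f • Finsupp.single t 1 := by
      intro t
      have hker : RM.aug (f • Finsupp.single t 1) = 0 := by
        rw [map_smul]
        exact Module.mem_annihilator.1 hfann _
      have hrange : f • (Finsupp.single t 1 : RM.ι 0 →₀ MvPolynomial (Fin n) k)
          ∈ LinearMap.range (RM.diff 0) := by
        rw [← RM.ker_aug]
        exact LinearMap.mem_ker.2 hker
      obtain ⟨y, hy⟩ := hrange
      exact exists_homog_preimage (RM.diff 0) (RM.diff_graded 0) (hsmul (RM.dg 0) t) hy
    choose g hg1 hg2 using key
    refine ⟨g, hg1, ?_⟩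
    have hDH : (RM.diff 0).comp (Finsupp.linearCombination (MvPolynomial (Fin n) k) g)
        = LinearMap.lsmul (MvPolynomial (Fin n) k) _ f := by
      apply Finsupp.lhom_ext
      intro a b
      rw [LinearMap.comp_apply, Finsupp.linearCombination_single, map_smul, hg2 a,
        LinearMap.lsmul_apply, smul_comm, Finsupp.smul_single, smul_eq_mul, mul_one]
    intro y
    rw [← RM.exact 0]
    rw [LinearMap.mem_ker, map_sub, map_smul]
    have := LinearMap.congr_fun hDH (RM.diff 0 y)
    rw [LinearMap.comp_apply, LinearMap.lsmul_apply] at this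
    rw [this, sub_self]
  | succ i ih =>
    obtain ⟨g, hg1, hg2⟩ := ih
    have key : ∀ t : RM.ι (i + 1), ∃ gt,
        gt ∈ freePiece k n (RM.dg (i + 2)) (RM.dg (i + 1) t + d) ∧
          RM.diff (i + 1) gt = f • Finsupp.single t 1 -
            Finsupp.linearCombination (MvPolynomial (Fin n) k) g
              (RM.diff i (Finsupp.single t 1)) := by
      intro t
      have hmem : f • (Finsupp.single t 1 : RM.ι (i+1) →₀ MvPolynomial (Fin n) k) -
          Finsupp.linearCombination (MvPolynomial (Fin n) k) g
            (RM.diff i (Finsupp.single t 1))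
          ∈ freePiece k n (RM.dg (i + 1)) (RM.dg (i + 1) t + d) := by
        refine Submodule.sub_mem _ (hsmul (RM.dg (i+1)) t) ?_
        exact linearCombination_mem_freePiece hg1
          (RM.diff_graded i _ _ (single_one_mem_freePiece (RM.dg (i+1)) t))
      obtain ⟨y, hy⟩ := hg2 (Finsupp.single t 1)
      exact exists_homog_preimage (RM.diff (i + 1)) (RM.diff_graded (i + 1)) hmem hy
    choose g' hg'1 hg'2 using key
    refine ⟨g', hg'1, ?_⟩
    have hDH : ∀ x : RM.ι (i + 1) →₀ MvPolynomial (Fin n) k,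
        RM.diff (i + 1) (Finsupp.linearCombination (MvPolynomial (Fin n) k) g' x)
          = f • x - Finsupp.linearCombination (MvPolynomial (Fin n) k) g (RM.diff i x) := by
      have heq : (RM.diff (i + 1)).comp
            (Finsupp.linearCombination (MvPolynomial (Fin n) k) g')
          = LinearMap.lsmul (MvPolynomial (Fin n) k) _ f -
            (Finsupp.linearCombination (MvPolynomial (Fin n) k) g).comp (RM.diff i) := by
        apply Finsupp.lhom_ext
        intro a b
        rw [LinearMap.comp_apply, Finsupp.linearCombination_single, map_smul, hg'2 a,
          LinearMap.sub_apply, LinearMap.lsmul_apply, LinearMap.comp_apply, smul_sub]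
        congr 1
        · rw [smul_comm, Finsupp.smul_single, smul_eq_mul, mul_one]
        · rw [← map_smul, ← map_smul, Finsupp.smul_single, smul_eq_mul, mul_one]
      intro x
      have := LinearMap.congr_fun heq x
      rwa [LinearMap.comp_apply, LinearMap.sub_apply, LinearMap.lsmul_apply,
        LinearMap.comp_apply] at this
    intro y
    rw [← RM.exact (i + 1), LinearMap.mem_ker, map_sub, map_smul, hDH]
    have hzero : RM.diff i (RM.diff (i + 1) y) = 0 := by
      have : RM.diff (i + 1) y ∈ LinearMap.ker (RM.diff i) := by
        rw [RM.exact i]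
        exact ⟨y, rfl⟩
      exact LinearMap.mem_ker.1 this
    rw [hzero, map_zero, sub_zero, sub_self]

/-- If `M` is a finitely generated graded `S`-module of projective
dimension `p` and `f` is a nonzero homogeneous element of `Ann M` of degree `d`,
then `T_p(M) ≤ T_{p-1}(M) + d`. -/
theorem stmt6 (k : Type) [Field k] (n : ℕ)
    (M : Type) [AddCommGroup M] [Module (MvPolynomial (Fin n) k) M] [Module k M]
    [IsScalarTower k (MvPolynomial (Fin n) k) M]
    (pM : ℤ → Submodule k M) (hgrM : IsGrading k n M pM)
    (RM : MinFreeRes k n M pM) (p : ℕ) (hp : RM.lengthEq p)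
    (f : MvPolynomial (Fin n) k) (hf0 : f ≠ 0) (d : ℕ)
    (hfhom : f ∈ MvPolynomial.homogeneousSubmodule (Fin n) k d)
    (hfann : f ∈ Module.annihilator (MvPolynomial (Fin n) k) M) :
    RM.T p ≤ RM.T (p - 1) + ((d : ℤ) : WithBot ℤ) := by
  rcases p with _ | q
  · exact le_add_of_nonneg_right (by exact_mod_cast Int.natCast_nonneg d)
  have hempty : IsEmpty (RM.ι (q + 1 + 1)) := hp.2 _ (by omega)
  obtain ⟨g, hg1, hg2⟩ := RM.homotopy f d hfhom hfann q
  show RM.T (q + 1) ≤ RM.T (q + 1 - 1) + ((d : ℤ) : WithBot ℤ)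
  rw [Nat.add_sub_cancel]
  unfold MinFreeRes.T
  letI := RM.fin (q + 1)
  letI := RM.fin q
  refine Finset.sup_le fun t _ => ?_
  have hex : ∃ s : RM.ι q, RM.dg (q + 1) t ≤ RM.dg q s + d := by
    by_contra hcon
    push_neg at hcon
    have h0 : f • (Finsupp.single t 1 : RM.ι (q + 1) →₀ MvPolynomial (Fin n) k)
        = Finsupp.linearCombination (MvPolynomial (Fin n) k) g
            (RM.diff q (Finsupp.single t 1)) := by
      obtain ⟨z, hz⟩ := hg2 (Finsupp.single t 1)
      have hz0 : z = 0 := by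
        ext a
        exact hempty.elim a
      rw [hz0, map_zero] at hz
      exact sub_eq_zero.1 hz.symm
    have hft := congrArg (fun v : RM.ι (q + 1) →₀ MvPolynomial (Fin n) k => v t) h0
    rw [Finsupp.smul_apply, Finsupp.single_eq_same, smul_eq_mul, mul_one,
      Finsupp.linearCombination_apply, Finsupp.sum_apply] at hft
    simp only [Finsupp.smul_apply] at hft
    have hzero : ∀ s ∈ (RM.diff q (Finsupp.single t 1)).support,
        (RM.diff q (Finsupp.single t 1)) s • g s t = 0 := by
      intro s _
      have hgs : g s t ∈ polyPiece k n (RM.dg q s + (d : ℤ) - RM.dg (q + 1) t) :=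
        mem_freePiece_iff.1 (hg1 s) t
      rw [mem_polyPiece_neg (by have := hcon s; omega) hgs, smul_zero]
    rw [Finsupp.sum, Finset.sum_congr rfl hzero, Finset.sum_const_zero] at hft
    exact hf0 hft
  obtain ⟨s, hs⟩ := hex
  calc ((RM.dg (q + 1) t : ℤ) : WithBot ℤ)
      ≤ ((RM.dg q s + (d : ℤ) : ℤ) : WithBot ℤ) := by exact_mod_cast hs
    _ = ((RM.dg q s : ℤ) : WithBot ℤ) + ((d : ℤ) : WithBot ℤ) := by
        rw [← WithBot.coe_add]
    _ ≤ (Finset.univ.sup fun u => ((RM.dg q u : ℤ) : WithBot ℤ)) + ((d : ℤ) : WithBot ℤ) :=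
        add_le_add_left (Finset.le_sup (f := fun u => ((RM.dg q u : ℤ) : WithBot ℤ)) (Finset.mem_univ s)) _
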